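/- Fix an integer d ≥ 1, p ∈ (1,∞), a penalty function φ, and let μ ∈ 𝒫_p(ℝ^d). Then for every t ≥ 0 and f ∈ C₀(ℝ^d), the function S(t)f belongs to C₀(ℝ^d); moreover, S(t)f has the same modulus of continuity as f: for all ε, δ > 0, if |f(x) − f(y)| ≤ ε whenever |x − y| ≤ δ, then |S(t)f(x) − S(t)f(y)| ≤ ε whenever |x − y| ≤ δ. -/

import Mathlib

open MeasureTheory Filter Topology ENNReal NNReal Set ZeroAtInfty
noncomputable section

/-- Euclidean space ℝ^d. -/
abbrev Ed (d : ℕ) := EuclideanSpace ℝ (Fin d)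

/-- `𝒫_p(ℝ^d)`: Borel probability measures with finite `p`-th moment. -/
def MemPp {d : ℕ} (p : ℝ) (μ : Measure (Ed d)) : Prop :=
  IsProbabilityMeasure μ ∧ ∫⁻ x, (‖x‖₊ : ℝ≥0∞) ^ p ∂μ < ∞

/-- `γ` is a coupling of `μ` and `ν`. -/
def IsCoupling {d : ℕ} (γ : Measure (Ed d × Ed d)) (μ ν : Measure (Ed d)) : Prop :=
  γ.map Prod.fst = μ ∧ γ.map Prod.snd = ν

/-- The `p`-Wasserstein distance `𝒲_p(μ, ν)`. -/
def Wp {d : ℕ} (p : ℝ) (μ ν : Measure (Ed d)) : ℝ :=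
  (⨅ γ ∈ {γ : Measure (Ed d × Ed d) | IsCoupling γ μ ν},
    (∫⁻ q, (‖q.2 - q.1‖₊ : ℝ≥0∞) ^ p ∂γ) ^ (1 / p)).toReal

/-- The scaled penalty `φ_t(r) = t·φ(r/t)` for `t > 0`; `φ_0(0) = 0`, `φ_0(r) = ∞` for `r > 0`. -/
def phit (φ : ℝ≥0 → ℝ≥0∞) (t : ℝ) (r : ℝ≥0) : ℝ≥0∞ :=
  if 0 < t then (t.toNNReal : ℝ≥0∞) * φ (r / t.toNNReal) else (if r = 0 then 0 else ∞)

/-- `φ` is a penalty function: lower semicontinuous, convex, increasing, not constant,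
`φ(0) = 0`, and `x ↦ φ(x^{1/p})` is convex. -/
structure IsPenalty (p : ℝ) (φ : ℝ≥0 → ℝ≥0∞) : Prop where
  lsc : LowerSemicontinuous φ
  convex : ∀ a b l m : ℝ≥0, l + m = 1 →
    φ (l * a + m * b) ≤ (l : ℝ≥0∞) * φ a + (m : ℝ≥0∞) * φ b
  mono : Monotone φ
  not_const : ∃ a b, φ a ≠ φ b
  map_zero : φ 0 = 0
  convex_rpow : ∀ a b l m : ℝ≥0, l + m = 1 →
    φ ((l * a + m * b) ^ (1 / p)) ≤ (l : ℝ≥0∞) * φ (a ^ (1 / p)) + (m : ℝ≥0∞) * φ (b ^ (1 / p))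

/-- The convex conjugate `φ*(y) = sup_{x ≥ 0} (xy − φ(x))`. -/
def phiStar (φ : ℝ≥0 → ℝ≥0∞) (y : ℝ≥0) : ℝ≥0∞ :=
  ⨆ x : ℝ≥0, ((x * y : ℝ≥0) : ℝ≥0∞) - φ x

/-- The one-step operator `S(t)f(x) = sup_ν ( ∫ f(x+y) ν(dy) − φ_t(𝒲_p(μ_t, ν)) )`. -/
def Sop {d : ℕ} (p : ℝ) (φ : ℝ≥0 → ℝ≥0∞) (μt : Measure (Ed d)) (t : ℝ)
    (f : Ed d → ℝ) (x : Ed d) : ℝ :=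
  sSup { r : ℝ | ∃ ν : Measure (Ed d), MemPp p ν ∧ ∃ c : ℝ, 0 ≤ c ∧
    phit φ t (Wp p μt ν).toNNReal ≤ ENNReal.ofReal c ∧ r = (∫ y, f (x + y) ∂ν) - c }

/-- The iterated operator `𝒮ⁿ(t) = S(2⁻ⁿ)^{∘ k} ∘ S(t − k·2⁻ⁿ)`, `k = ⌊2ⁿ t⌋`. -/
def SiterN {d : ℕ} (p : ℝ) (φ : ℝ≥0 → ℝ≥0∞) (μ : ℝ → Measure (Ed d)) (n : ℕ) (t : ℝ)
    (f : Ed d → ℝ) : Ed d → ℝ :=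
  (fun g => Sop p φ (μ ((2 : ℝ) ^ n)⁻¹) ((2 : ℝ) ^ n)⁻¹ g)^[⌊(2:ℝ)^n * t⌋₊]
    (Sop p φ (μ (t - ⌊(2:ℝ)^n * t⌋₊ * ((2:ℝ)^n)⁻¹)) (t - ⌊(2:ℝ)^n * t⌋₊ * ((2:ℝ)^n)⁻¹) f)

/-- The limiting operator `𝒮(t)f = lim_n 𝒮ⁿ(t)f` (a decreasing limit, i.e. an infimum). -/
def Slim {d : ℕ} (p : ℝ) (φ : ℝ≥0 → ℝ≥0∞) (μ : ℝ → Measure (Ed d)) (t : ℝ)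
    (f : Ed d → ℝ) (x : Ed d) : ℝ :=
  ⨅ n : ℕ, SiterN p φ μ n t f x

/-- `f ∈ C₀(ℝ^d)`: continuous and vanishing at infinity. -/
def IsC0 {d : ℕ} (f : Ed d → ℝ) : Prop :=
  Continuous f ∧ Tendsto f (cocompact (Ed d)) (𝓝 0)

/-- `(μ_t)_{t ≥ 0}` is a convolution semigroup in `𝒫_p(ℝ^d)`. -/
def IsConvSemigroup {d : ℕ} (p : ℝ) (μ : ℝ → Measure (Ed d)) : Prop :=
  μ 0 = Measure.dirac 0 ∧ (∀ s t : ℝ, 0 ≤ s → 0 ≤ t → μ (s + t) = (μ s).conv (μ t)) ∧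
    ∀ t : ℝ, 0 ≤ t → MemPp p (μ t)

/-- `𝒲_p(μ_t, δ_0) → 0` as `t ↓ 0`. -/
def WContinuousAtZero {d : ℕ} (p : ℝ) (μ : ℝ → Measure (Ed d)) : Prop :=
  Tendsto (fun t => Wp p (μ t) (Measure.dirac 0)) (𝓝[>] (0:ℝ)) (𝓝 0)

/-- The semigroup of the underlying Lévy process, `S^μ(t)f(x) = ∫ f(x+y) μ_t(dy)`. -/
def Smu {d : ℕ} (μ : ℝ → Measure (Ed d)) (t : ℝ) (f : Ed d → ℝ) (x : Ed d) : ℝ :=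
  ∫ y, f (x + y) ∂(μ t)

/-- `f ∈ D(A^μ)` with `A^μ f = Af`: `(S^μ(t)f − f)/t → Af` uniformly as `t ↓ 0`. -/
def HasGenerator {d : ℕ} (μ : ℝ → Measure (Ed d)) (f Af : Ed d → ℝ) : Prop :=
  TendstoUniformly (fun t x => (Smu μ t f x - f x) / t) Af (𝓝[>] (0:ℝ))

/-- `f ∈ C₀¹(ℝ^d)`: continuously differentiable, vanishing at infinity, with gradient
vanishing at infinity. -/
def IsC01 {d : ℕ} (f : Ed d → ℝ) : Prop :=
  IsC0 f ∧ ContDiff ℝ 1 f ∧ Tendsto (fun x => gradient f x) (cocompact (Ed d)) (𝓝 0)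



section Aux
variable {d : ℕ} {p : ℝ} {φ : ℝ≥0 → ℝ≥0∞} {μ : Measure (Ed d)} {t : ℝ}

lemma abs_f_le (f : C₀(Ed d, ℝ)) (z : Ed d) : |f z| ≤ ‖f‖ := by
  rw [← ZeroAtInftyContinuousMap.norm_toBCF_eq_norm, ← Real.norm_eq_abs]
  exact f.toBCF.norm_coe_le_norm z

lemma integrable_shift (f : C₀(Ed d, ℝ)) (ν : Measure (Ed d)) [IsProbabilityMeasure ν]
    (x : Ed d) : Integrable (fun y => f (x + y)) ν := by
  refine ⟨((map_continuous f).comp (continuous_const.add continuous_id)).aestronglyMeasurable, ?_⟩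
  exact HasFiniteIntegral.of_bounded (C := ‖f‖) (ae_of_all _ fun y => by
    simpa [Real.norm_eq_abs] using abs_f_le f (x + y))

lemma abs_int_le (f : C₀(Ed d, ℝ)) (ν : Measure (Ed d)) [IsProbabilityMeasure ν]
    (x : Ed d) : |∫ y, f (x + y) ∂ν| ≤ ‖f‖ := by
  have := norm_integral_le_of_norm_le_const (μ := ν) (f := fun y => f (x + y)) (C := ‖f‖)
    (ae_of_all _ fun y => by simpa [Real.norm_eq_abs] using abs_f_le f (x + y))
  simpa [Real.norm_eq_abs, measure_univ] using this

lemma Wp_self (hp : 0 < p) (μ : Measure (Ed d)) [IsProbabilityMeasure μ] : Wp p μ μ = 0 := by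
  have hdiag : Measurable (fun x : Ed d => (x, x)) := measurable_id.prodMk measurable_id
  have hcoup : IsCoupling (μ.map fun x => (x, x)) μ μ := by
    constructor
    · rw [Measure.map_map measurable_fst hdiag]
      simp [Function.comp_def]
    · rw [Measure.map_map measurable_snd hdiag]
      simp [Function.comp_def]
  have hcost : ∫⁻ q, (‖q.2 - q.1‖₊ : ℝ≥0∞) ^ p ∂(μ.map fun x => (x, x)) = 0 := by
    rw [lintegral_map (f := fun q : Ed d × Ed d => (‖q.2 - q.1‖₊ : ℝ≥0∞) ^ p) (((measurable_snd.sub measurable_fst).nnnorm.coe_nnreal_ennreal).pow_const p) hdiag]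
    simp [ENNReal.zero_rpow_of_pos hp]
  have hle : (⨅ γ ∈ {γ : Measure (Ed d × Ed d) | IsCoupling γ μ μ},
      (∫⁻ q, (‖q.2 - q.1‖₊ : ℝ≥0∞) ^ p ∂γ) ^ (1 / p)) ≤ 0 := by
    refine le_trans (iInf₂_le (μ.map fun x => (x, x)) hcoup) ?_
    rw [hcost, ENNReal.zero_rpow_of_pos (by positivity)]
  unfold Wp
  rw [le_zero_iff.mp hle]
  simp

lemma phit_zero (hφ : IsPenalty p φ) (t : ℝ) : phit φ t 0 = 0 := by
  unfold phit
  split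
  · simp [hφ.map_zero]
  · simp

lemma mem_SopSet_base (hp : 0 < p) (hφ : IsPenalty p φ) (hμ : MemPp p μ)
    (f : C₀(Ed d, ℝ)) (x : Ed d) :
    (∫ y, f (x + y) ∂μ) ∈ { r : ℝ | ∃ ν : Measure (Ed d), MemPp p ν ∧ ∃ c : ℝ, 0 ≤ c ∧
      phit φ t (Wp p μ ν).toNNReal ≤ ENNReal.ofReal c ∧ r = (∫ y, f (x + y) ∂ν) - c } := by
  haveI := hμ.1
  refine ⟨μ, hμ, 0, le_refl _, ?_, by ring⟩
  rw [Wp_self hp μ]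
  simp [phit_zero hφ]

lemma SopSet_bound (hμ : MemPp p μ) (f : C₀(Ed d, ℝ)) (x : Ed d) {r : ℝ}
    (hr : r ∈ { r : ℝ | ∃ ν : Measure (Ed d), MemPp p ν ∧ ∃ c : ℝ, 0 ≤ c ∧
      phit φ t (Wp p μ ν).toNNReal ≤ ENNReal.ofReal c ∧ r = (∫ y, f (x + y) ∂ν) - c }) :
    r ≤ ‖f‖ := by
  obtain ⟨ν, hν, c, hc, -, rfl⟩ := hr
  haveI := hν.1
  have := abs_int_le f ν x
  have h1 := abs_le.mp this
  linarith [h1.2]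

lemma SopSet_bddAbove (hμ : MemPp p μ) (f : C₀(Ed d, ℝ)) (x : Ed d) :
    BddAbove { r : ℝ | ∃ ν : Measure (Ed d), MemPp p ν ∧ ∃ c : ℝ, 0 ≤ c ∧
      phit φ t (Wp p μ ν).toNNReal ≤ ENNReal.ofReal c ∧ r = (∫ y, f (x + y) ∂ν) - c } :=
  ⟨‖f‖, fun _ hr => SopSet_bound hμ f x hr⟩

lemma Sop_le_norm (hp : 0 < p) (hφ : IsPenalty p φ) (hμ : MemPp p μ) (f : C₀(Ed d, ℝ))
    (x : Ed d) : Sop p φ μ t (⇑f) x ≤ ‖f‖ :=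
  csSup_le ⟨_, mem_SopSet_base hp hφ hμ f x⟩ (fun _ hr => SopSet_bound hμ f x hr)

lemma base_le_Sop (hp : 0 < p) (hφ : IsPenalty p φ) (hμ : MemPp p μ) (f : C₀(Ed d, ℝ))
    (x : Ed d) : (∫ y, f (x + y) ∂μ) ≤ Sop p φ μ t (⇑f) x :=
  le_csSup (SopSet_bddAbove hμ f x) (mem_SopSet_base hp hφ hμ f x)

end Aux
section Aux2
variable {d : ℕ} {p : ℝ} {φ : ℝ≥0 → ℝ≥0∞} {μ : Measure (Ed d)} {t : ℝ}

lemma Sop_modulus_half (hp : 0 < p) (hφ : IsPenalty p φ) (hμ : MemPp p μ)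
    (f : C₀(Ed d, ℝ)) {ε δ : ℝ} (hε : 0 ≤ ε)
    (hf : ∀ x y : Ed d, ‖x - y‖ ≤ δ → |f x - f y| ≤ ε)
    {x y : Ed d} (hxy : ‖x - y‖ ≤ δ) :
    Sop p φ μ t (⇑f) x ≤ Sop p φ μ t (⇑f) y + ε := by
  haveI := hμ.1
  refine csSup_le ⟨_, mem_SopSet_base hp hφ hμ f x⟩ ?_
  rintro r ⟨ν, hν, c, hc, hcon, rfl⟩
  haveI := hν.1
  have h1 : (∫ z, f (x + z) ∂ν) ≤ (∫ z, f (y + z) ∂ν) + ε := by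
    have hpt : ∀ z, f (x + z) ≤ f (y + z) + ε := fun z => by
      have h := hf (x + z) (y + z) (by simpa [add_sub_add_right_eq_sub] using hxy)
      linarith [(abs_le.mp h).2]
    calc (∫ z, f (x + z) ∂ν) ≤ ∫ z, (f (y + z) + ε) ∂ν :=
          integral_mono (integrable_shift f ν x) ((integrable_shift f ν y).add
            (integrable_const _)) hpt
      _ = (∫ z, f (y + z) ∂ν) + ε := by
          rw [integral_add (integrable_shift f ν y) (integrable_const _)]
          simp [measure_univ]
  have h2 : (∫ z, f (y + z) ∂ν) - c ≤ Sop p φ μ t (⇑f) y :=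
    le_csSup (SopSet_bddAbove hμ f y) ⟨ν, hν, c, hc, hcon, rfl⟩
  linarith

lemma Sop_modulus (hp : 0 < p) (hφ : IsPenalty p φ) (hμ : MemPp p μ)
    (f : C₀(Ed d, ℝ)) {ε δ : ℝ} (hε : 0 ≤ ε)
    (hf : ∀ x y : Ed d, ‖x - y‖ ≤ δ → |f x - f y| ≤ ε)
    {x y : Ed d} (hxy : ‖x - y‖ ≤ δ) :
    |Sop p φ μ t (⇑f) x - Sop p φ μ t (⇑f) y| ≤ ε := by
  rw [abs_sub_le_iff]
  constructor
  · linarith [Sop_modulus_half (t := t) hp hφ hμ f hε hf hxy]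
  · linarith [Sop_modulus_half (t := t) hp hφ hμ f hε hf (by rwa [norm_sub_rev] at hxy)]

lemma Sop_uniformContinuous (hp : 0 < p) (hφ : IsPenalty p φ) (hμ : MemPp p μ)
    (f : C₀(Ed d, ℝ)) : UniformContinuous (Sop p φ μ t (⇑f)) := by
  rw [Metric.uniformContinuous_iff]
  intro ε hε
  obtain ⟨δ, hδ, hfδ⟩ := Metric.uniformContinuous_iff.mp
    (ZeroAtInftyContinuousMap.uniformContinuous f) (ε / 2) (by linarith)
  refine ⟨δ / 2, by linarith, fun a b hab => ?_⟩
  have hmod : ∀ x y : Ed d, ‖x - y‖ ≤ δ / 2 → |f x - f y| ≤ ε / 2 := by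
    intro x y hxy
    have : dist x y < δ := by rw [dist_eq_norm]; linarith
    have := hfδ this
    rw [Real.dist_eq] at this
    linarith
  have := Sop_modulus (t := t) hp hφ hμ f (by linarith) hmod
    (x := a) (y := b) (by rw [← dist_eq_norm]; linarith)
  rw [Real.dist_eq]
  linarith [this]

end Aux2
section Aux3
variable {d : ℕ} {p : ℝ} {φ : ℝ≥0 → ℝ≥0∞}

lemma tail_small (μ : Measure (Ed d)) [IsFiniteMeasure μ] {η : ℝ} (hη : 0 < η) :
    ∃ S : ℝ, 0 < S ∧ μ {y : Ed d | S ≤ ‖y‖} ≤ ENNReal.ofReal η := by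
  have hmeas : ∀ n : ℕ, NullMeasurableSet {y : Ed d | (n : ℝ) ≤ ‖y‖} μ := fun n =>
    ((isClosed_le continuous_const continuous_norm).measurableSet).nullMeasurableSet
  have hanti : Antitone (fun n : ℕ => {y : Ed d | (n : ℝ) ≤ ‖y‖}) := by
    intro m n hmn y hy
    simp only [Set.mem_setOf_eq] at hy ⊢
    exact le_trans (Nat.cast_le.mpr hmn) hy
  have hlim := MeasureTheory.tendsto_measure_iInter_atTop hmeas hanti ⟨0, measure_ne_top μ _⟩
  have hempty : (⋂ n : ℕ, {y : Ed d | (n : ℝ) ≤ ‖y‖}) = ∅ := by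
    ext y
    simp only [Set.mem_iInter, Set.mem_setOf_eq, Set.mem_empty_iff_false, iff_false, not_forall,
      not_le]
    exact ⟨⌈‖y‖⌉₊ + 1, by push_cast; linarith [Nat.le_ceil ‖y‖]⟩
  rw [hempty, measure_empty] at hlim
  have := hlim.eventually_lt_const (show (0 : ℝ≥0∞) < ENNReal.ofReal η by simpa using hη)
  obtain ⟨n, hn⟩ := this.exists
  refine ⟨(n : ℝ) + 1, by positivity, ?_⟩
  refine le_trans (measure_mono ?_) hn.le
  intro y hy
  simp only [Set.mem_setOf_eq] at hy ⊢
  linarith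

lemma exists_R_small (f : C₀(Ed d, ℝ)) {η : ℝ} (hη : 0 < η) :
    ∃ R : ℝ, 0 < R ∧ ∀ z : Ed d, R ≤ ‖z‖ → |f z| ≤ η := by
  have h : ∀ᶠ z in cocompact (Ed d), dist (f z) 0 < η :=
    (Metric.tendsto_nhds.1 (zero_at_infty f)) η hη
  rw [Filter.eventually_iff, Filter.mem_cocompact] at h
  obtain ⟨K, hK, hKs⟩ := h
  obtain ⟨R, hR⟩ := hK.isBounded.subset_closedBall 0
  refine ⟨max R 0 + 1, by positivity, fun z hz => ?_⟩
  have hzK : z ∉ K := by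
    intro hzK
    have := hR hzK
    rw [Metric.mem_closedBall, dist_zero_right] at this
    have := le_max_left R 0
    linarith
  have := hKs hzK
  simp only [Set.mem_setOf_eq, Real.dist_eq, sub_zero] at this
  linarith

lemma phit_growth (hp : 1 < p) (hφ : IsPenalty p φ) {t : ℝ} (ht : 0 ≤ t) (C : ℝ) :
    ∃ W : ℝ, 0 < W ∧ ∀ w : ℝ≥0, W ≤ (w : ℝ) → ENNReal.ofReal C ≤ phit φ t w := by
  -- find a with φ a ≠ 0
  obtain ⟨a, ha0, hφa⟩ : ∃ a : ℝ≥0, a ≠ 0 ∧ φ a ≠ 0 := by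
    obtain ⟨a, b, hab⟩ := hφ.not_const
    rcases eq_or_ne (φ a) 0 with h | h
    · have hb : φ b ≠ 0 := fun h0 => hab (h.trans h0.symm)
      exact ⟨b, fun hb0 => hb (by rw [hb0, hφ.map_zero]), hb⟩
    · exact ⟨a, fun ha => h (by rw [ha, hφ.map_zero]), h⟩
  rcases eq_or_lt_of_le ht with rfl | htpos
  · -- t = 0
    refine ⟨1, one_pos, fun w hw => ?_⟩
    have hw0 : w ≠ 0 := by
      intro h0
      rw [h0] at hw
      simp at hw
      linarith
    unfold phit
    simp [hw0]
  · -- t > 0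
    set T : ℝ≥0 := t.toNNReal with hT
    have hT0 : T ≠ 0 := by
      simp [hT, Real.toNNReal_eq_zero]
      linarith
    -- key convexity estimate: for s ≥ a, (s/a) * φ a ≤ φ s
    have hkey : ∀ s : ℝ≥0, a ≤ s → ((s : ℝ≥0∞) / (a : ℝ≥0∞)) * φ a ≤ φ s := by
      intro s hs
      have hs0 : s ≠ 0 := fun h => ha0 (le_antisymm (h ▸ hs) zero_le)
      have hl : a / s ≤ 1 := div_le_one_of_le₀ hs zero_le
      have hconv := hφ.convex s 0 (a / s) (1 - a / s) (by
        rw [add_tsub_cancel_of_le hl])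
      rw [mul_zero, add_zero, div_mul_cancel₀ _ hs0, hφ.map_zero, mul_zero, add_zero] at hconv
      -- hconv : φ a ≤ (a/s : ℝ≥0∞) * φ s
      have hcoe : ((a / s : ℝ≥0) : ℝ≥0∞) = (a : ℝ≥0∞) / (s : ℝ≥0∞) := by
        rw [ENNReal.coe_div hs0]
      rw [hcoe] at hconv
      calc ((s : ℝ≥0∞) / (a : ℝ≥0∞)) * φ a
          ≤ ((s : ℝ≥0∞) / (a : ℝ≥0∞)) * ((a : ℝ≥0∞) / (s : ℝ≥0∞) * φ s) :=
            mul_le_mul_of_nonneg_left hconv zero_le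
        _ = ((s : ℝ≥0∞) * (s : ℝ≥0∞)⁻¹) * ((a : ℝ≥0∞)⁻¹ * (a : ℝ≥0∞)) * φ s := by
            rw [div_eq_mul_inv, div_eq_mul_inv]; ring
        _ = φ s := by
            rw [ENNReal.mul_inv_cancel (by exact_mod_cast hs0) (by simp),
              ENNReal.inv_mul_cancel (by exact_mod_cast ha0) (by simp)]
            simp
    rcases eq_or_ne (φ a) ∞ with hinf | hfin
    · -- φ a = ∞ : take W = t * a + 1
      refine ⟨t * (a : ℝ) + 1, by positivity, fun w hw => ?_⟩
      have hTa : a ≤ w / T := by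
        rw [le_div_iff₀ (pos_iff_ne_zero.mpr hT0)]
        have : (a * T : ℝ≥0) = ((t * a : ℝ).toNNReal) := by
          rw [Real.toNNReal_mul (le_of_lt htpos)]
          simp [hT, mul_comm]
        rw [this]
        rw [← NNReal.coe_le_coe]
        rw [Real.coe_toNNReal _ (by positivity)]
        linarith
      have : φ (w / T) = ∞ := by
        have := hφ.mono hTa
        rw [hinf] at this
        exact top_le_iff.mp this
      unfold phit
      rw [if_pos htpos, ← hT, this, ENNReal.mul_top (by exact_mod_cast hT0)]
      exact le_top
    · -- φ a finite
      set q : ℝ≥0 := (φ a).toNNReal with hq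
      have hq0 : 0 < (q : ℝ) := by
        have : q ≠ 0 := by
          simp [hq, ENNReal.toNNReal_eq_zero_iff]
          exact ⟨hφa, hfin⟩
        positivity
      have hφaq : φ a = (q : ℝ≥0∞) := by
        rw [hq, ENNReal.coe_toNNReal hfin]
      have ha0' : 0 < (a : ℝ) := by positivity
      refine ⟨max (t * (a : ℝ) + 1) ((max C 0) * (a : ℝ) / (q : ℝ) + 1), by positivity,
        fun w hw => ?_⟩
      have hw1 : t * (a : ℝ) + 1 ≤ (w : ℝ) := le_trans (le_max_left _ _) hw
      have hw2 : (max C 0) * (a : ℝ) / (q : ℝ) + 1 ≤ (w : ℝ) := le_trans (le_max_right _ _) hw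
      have hTa : a ≤ w / T := by
        rw [le_div_iff₀ (pos_iff_ne_zero.mpr hT0)]
        have : (a * T : ℝ≥0) = ((t * a : ℝ).toNNReal) := by
          rw [Real.toNNReal_mul (le_of_lt htpos)]
          simp [hT, mul_comm]
        rw [this, ← NNReal.coe_le_coe, Real.coe_toNNReal _ (by positivity)]
        linarith
      have hlow := hkey (w / T) hTa
      unfold phit
      rw [if_pos htpos, ← hT]
      refine le_trans ?_ (mul_le_mul_of_nonneg_left hlow zero_le)
      -- goal: ofReal C ≤ T * ((w/T)/a * φ a)
      have hTne : (T : ℝ≥0∞) ≠ 0 := by exact_mod_cast hT0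
      have hTfin : (T : ℝ≥0∞) ≠ ∞ := by simp
      have hcoediv : ((w / T : ℝ≥0) : ℝ≥0∞) = (w : ℝ≥0∞) / (T : ℝ≥0∞) :=
        ENNReal.coe_div hT0
      rw [hφaq, hcoediv]
      have heq : (T : ℝ≥0∞) * ((w : ℝ≥0∞) / (T : ℝ≥0∞) / (a : ℝ≥0∞) * (q : ℝ≥0∞))
          = (w : ℝ≥0∞) / (a : ℝ≥0∞) * (q : ℝ≥0∞) := by
        rw [div_eq_mul_inv, div_eq_mul_inv, div_eq_mul_inv]
        calc (T:ℝ≥0∞) * ((w:ℝ≥0∞) * (T:ℝ≥0∞)⁻¹ * (a:ℝ≥0∞)⁻¹ * (q:ℝ≥0∞))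
            = ((T:ℝ≥0∞) * (T:ℝ≥0∞)⁻¹) * ((w:ℝ≥0∞) * (a:ℝ≥0∞)⁻¹ * (q:ℝ≥0∞)) := by ring
          _ = (w:ℝ≥0∞) * (a:ℝ≥0∞)⁻¹ * (q:ℝ≥0∞) := by
              rw [ENNReal.mul_inv_cancel hTne hTfin, one_mul]
      rw [heq]
      -- now: ofReal C ≤ (w/a)*q, all coercions
      have hfinal : C ≤ (w : ℝ) / (a : ℝ) * (q : ℝ) := by
        have h1 : (max C 0) * (a : ℝ) / (q : ℝ) ≤ (w : ℝ) := by linarith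
        have h2 : (max C 0) * (a : ℝ) ≤ (w : ℝ) * (q : ℝ) := by
          rw [div_le_iff₀ hq0] at h1
          linarith
        have h3 : max C 0 ≤ (w : ℝ) * (q : ℝ) / (a : ℝ) := by
          rw [le_div_iff₀ ha0']
          linarith
        calc C ≤ max C 0 := le_max_left _ _
          _ ≤ (w : ℝ) * (q : ℝ) / (a : ℝ) := h3
          _ = (w : ℝ) / (a : ℝ) * (q : ℝ) := by ring
      calc ENNReal.ofReal C ≤ ENNReal.ofReal ((w : ℝ) / (a : ℝ) * (q : ℝ)) :=
            ENNReal.ofReal_le_ofReal hfinal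
        _ = (w : ℝ≥0∞) / (a : ℝ≥0∞) * (q : ℝ≥0∞) := by
            rw [ENNReal.ofReal_mul (by positivity), ENNReal.ofReal_div_of_pos ha0']
            simp [ENNReal.ofReal_coe_nnreal]
      
end Aux3
section Aux4
variable {d : ℕ} {p : ℝ} {φ : ℝ≥0 → ℝ≥0∞}

lemma meas_cost : Measurable (fun q : Ed d × Ed d => (‖q.2 - q.1‖₊ : ℝ≥0∞) ^ p) :=
  ((measurable_snd.sub measurable_fst).nnnorm.coe_nnreal_ennreal).pow_const p

lemma prod_isCoupling (μ ν : Measure (Ed d)) [IsProbabilityMeasure μ] [IsProbabilityMeasure ν] :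
    IsCoupling (μ.prod ν) μ ν := by
  constructor
  · rw [Measure.map_fst_prod]; simp
  · rw [Measure.map_snd_prod]; simp

lemma prod_cost_ne_top (hp : 0 < p) {μ ν : Measure (Ed d)} (hμ : MemPp p μ) (hν : MemPp p ν) :
    ∫⁻ q, (‖q.2 - q.1‖₊ : ℝ≥0∞) ^ p ∂(μ.prod ν) ≠ ∞ := by
  haveI := hμ.1; haveI := hν.1
  have hbound : ∀ q : Ed d × Ed d, (‖q.2 - q.1‖₊ : ℝ≥0∞) ^ p ≤
      2 ^ p * ((‖q.1‖₊ : ℝ≥0∞) ^ p + (‖q.2‖₊ : ℝ≥0∞) ^ p) := by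
    intro q
    have h1 : (‖q.2 - q.1‖₊ : ℝ≥0∞) ≤ (‖q.1‖₊ : ℝ≥0∞) + (‖q.2‖₊ : ℝ≥0∞) := by
      have := nnnorm_sub_le q.2 q.1
      exact_mod_cast le_trans (by exact_mod_cast this) (by rw [add_comm])
    have h2 : (‖q.1‖₊ : ℝ≥0∞) + (‖q.2‖₊ : ℝ≥0∞) ≤
        2 * max (‖q.1‖₊ : ℝ≥0∞) (‖q.2‖₊ : ℝ≥0∞) := by
      rw [two_mul]
      exact add_le_add (le_max_left _ _) (le_max_right _ _)
    calc (‖q.2 - q.1‖₊ : ℝ≥0∞) ^ p ≤ (2 * max (‖q.1‖₊ : ℝ≥0∞) (‖q.2‖₊ : ℝ≥0∞)) ^ p :=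
          ENNReal.rpow_le_rpow (le_trans h1 h2) hp.le
      _ = 2 ^ p * (max (‖q.1‖₊ : ℝ≥0∞) (‖q.2‖₊ : ℝ≥0∞)) ^ p :=
          ENNReal.mul_rpow_of_nonneg _ _ hp.le
      _ ≤ 2 ^ p * ((‖q.1‖₊ : ℝ≥0∞) ^ p + (‖q.2‖₊ : ℝ≥0∞) ^ p) := by
          gcongr
          rcases max_cases (‖q.1‖₊ : ℝ≥0∞) (‖q.2‖₊ : ℝ≥0∞) with ⟨h, -⟩ | ⟨h, -⟩ <;> rw [h]
          · exact le_add_right (ENNReal.rpow_le_rpow le_rfl hp.le)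
          · exact le_add_left (ENNReal.rpow_le_rpow le_rfl hp.le)
  have hm1 : Measurable (fun y : Ed d => (‖y‖₊ : ℝ≥0∞) ^ p) :=
    (measurable_nnnorm.coe_nnreal_ennreal).pow_const p
  have key : ∫⁻ q, (‖q.2 - q.1‖₊ : ℝ≥0∞) ^ p ∂(μ.prod ν) ≤
      2 ^ p * ((∫⁻ y, (‖y‖₊ : ℝ≥0∞) ^ p ∂μ) + (∫⁻ y, (‖y‖₊ : ℝ≥0∞) ^ p ∂ν)) := by
    calc ∫⁻ q, (‖q.2 - q.1‖₊ : ℝ≥0∞) ^ p ∂(μ.prod ν)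
        ≤ ∫⁻ q, 2 ^ p * ((‖q.1‖₊ : ℝ≥0∞) ^ p + (‖q.2‖₊ : ℝ≥0∞) ^ p) ∂(μ.prod ν) :=
          lintegral_mono hbound
      _ = 2 ^ p * ((∫⁻ q, (‖q.1‖₊ : ℝ≥0∞) ^ p ∂(μ.prod ν)) +
            (∫⁻ q, (‖q.2‖₊ : ℝ≥0∞) ^ p ∂(μ.prod ν))) := by
          rw [lintegral_const_mul (f := fun q : Ed d × Ed d => (‖q.1‖₊ : ℝ≥0∞) ^ p + (‖q.2‖₊ : ℝ≥0∞) ^ p) _ (Measurable.add (hm1.comp measurable_fst) (hm1.comp measurable_snd) : Measurable fun q : Ed d × Ed d => (‖q.1‖₊ : ℝ≥0∞) ^ p + (‖q.2‖₊ : ℝ≥0∞) ^ p),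
            lintegral_add_left (show Measurable fun q : Ed d × Ed d => (‖q.1‖₊ : ℝ≥0∞) ^ p from hm1.comp measurable_fst)]
      _ = 2 ^ p * ((∫⁻ y, (‖y‖₊ : ℝ≥0∞) ^ p ∂μ) + (∫⁻ y, (‖y‖₊ : ℝ≥0∞) ^ p ∂ν)) := by
          congr 1
          congr 1
          · rw [← lintegral_map hm1 measurable_fst, Measure.map_fst_prod]
            simp
          · rw [← lintegral_map hm1 measurable_snd, Measure.map_snd_prod]
            simp
  refine ne_top_of_le_ne_top ?_ key
  apply ENNReal.mul_ne_top
  · exact ENNReal.rpow_ne_top_of_nonneg hp.le (by norm_num)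
  · exact ENNReal.add_ne_top.mpr ⟨hμ.2.ne, hν.2.ne⟩

end Aux4
section Aux5
variable {d : ℕ} {p : ℝ} {φ : ℝ≥0 → ℝ≥0∞} {μ : Measure (Ed d)} {t : ℝ}

lemma int_split (f : C₀(Ed d, ℝ)) (ν : Measure (Ed d)) [IsProbabilityMeasure ν] (x : Ed d)
    {R η : ℝ} (hη : 0 ≤ η) (hR : ∀ z : Ed d, R ≤ ‖z‖ → |f z| ≤ η) :
    |∫ y, f (x + y) ∂ν| ≤ η + ‖f‖ * (ν {y : Ed d | ‖x + y‖ < R}).toReal := by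
  set B := {y : Ed d | ‖x + y‖ < R} with hBdef
  have hBmeas : MeasurableSet B :=
    (isOpen_lt (continuous_const.add continuous_id).norm continuous_const).measurableSet
  have hindint : Integrable (B.indicator (fun _ => (1 : ℝ))) ν :=
    (integrable_const (1 : ℝ)).indicator hBmeas
  have hpt : ∀ y, |f (x + y)| ≤ η + ‖f‖ * B.indicator (fun _ => (1 : ℝ)) y := by
    intro y
    by_cases hy : y ∈ B
    · rw [Set.indicator_of_mem hy, mul_one]
      linarith [abs_f_le f (x + y)]
    · rw [Set.indicator_of_notMem hy, mul_zero, add_zero]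
      refine hR (x + y) ?_
      simp only [hBdef, Set.mem_setOf_eq, not_lt] at hy
      exact hy
  have h1 : |∫ y, f (x + y) ∂ν| ≤ ∫ y, |f (x + y)| ∂ν := by
    simpa [Real.norm_eq_abs] using
      norm_integral_le_integral_norm (f := fun y => f (x + y)) (μ := ν)
  have h2 : ∫ y, |f (x + y)| ∂ν ≤ ∫ y, (η + ‖f‖ * B.indicator (fun _ => (1 : ℝ)) y) ∂ν :=
    integral_mono (integrable_shift f ν x).abs
      ((integrable_const η).add (hindint.const_mul ‖f‖)) hpt
  have h3 : ∫ y, (η + ‖f‖ * B.indicator (fun _ => (1 : ℝ)) y) ∂ν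
      = η + ‖f‖ * (ν B).toReal := by
    rw [integral_add (integrable_const η) (hindint.const_mul ‖f‖), integral_const,
      MeasureTheory.integral_const_mul, integral_indicator hBmeas, setIntegral_const]
    simp [measure_univ, Measure.real]
  linarith

lemma Sop_small (hp : 1 < p) (hφ : IsPenalty p φ) (hμ : MemPp p μ) (ht : 0 ≤ t)
    (f : C₀(Ed d, ℝ)) {ε : ℝ} (hε : 0 < ε) :
    ∃ R₀ : ℝ, ∀ x : Ed d, R₀ ≤ ‖x‖ → |Sop p φ μ t (⇑f) x| ≤ ε := by
  haveI := hμ.1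
  have hp0 : 0 < p := lt_trans one_pos hp
  set M := ‖f‖ with hMdef
  have hM0 : 0 ≤ M := norm_nonneg f
  obtain ⟨R, hR0, hRf⟩ := exists_R_small f (show 0 < ε / 2 by linarith)
  set m₀ := ε / (2 * (M + 1)) with hm₀def
  have hm₀ : 0 < m₀ := by positivity
  have hm₀eq : m₀ * (2 * (M + 1)) = ε := div_mul_cancel₀ _ (by positivity)
  obtain ⟨S, hS0, hStail⟩ := tail_small μ (show 0 < m₀ / 2 by positivity)
  obtain ⟨W, hW0, hWgrow⟩ := phit_growth hp hφ ht M
  set β := (m₀ / 2) ^ (1 / p) with hβdef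
  have hβ : 0 < β := Real.rpow_pos_of_pos (by positivity) _
  refine ⟨R + S + ((W + 1) / β + 1), fun x hx => ?_⟩
  set B := {y : Ed d | ‖x + y‖ < R} with hBdef
  have hBmeas : MeasurableSet B :=
    (isOpen_lt (continuous_const.add continuous_id).norm continuous_const).measurableSet
  set G := {y : Ed d | ‖y‖ < S} with hGdef
  have hGmeas : MeasurableSet G :=
    (isOpen_lt continuous_norm continuous_const).measurableSet
  set L := ‖x‖ - R - S with hLdef
  have hL : (W + 1) / β + 1 ≤ L := by
    simp only [hLdef]
    linarith
  have hLpos : 0 < L := lt_of_lt_of_le (by positivity) hL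
  -- lower bound
  have hμB : (μ B).toReal ≤ m₀ / 2 := by
    have hsub : B ⊆ {y : Ed d | S ≤ ‖y‖} := by
      intro y hy
      simp only [hBdef, Set.mem_setOf_eq] at hy
      simp only [Set.mem_setOf_eq]
      have h1 : ‖x‖ - ‖x + y‖ ≤ ‖x - (x + y)‖ := norm_sub_norm_le _ _
      have h2 : x - (x + y) = -y := by abel
      rw [h2, norm_neg] at h1
      linarith
    exact ENNReal.toReal_le_of_le_ofReal (by positivity)
      (le_trans (measure_mono hsub) hStail)
  have hlow : -ε ≤ Sop p φ μ t (⇑f) x := by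
    refine le_trans ?_ (base_le_Sop hp0 hφ hμ f x)
    have hint := int_split f μ x (le_of_lt (half_pos hε)) hRf
    have habs := (abs_le.mp hint).1
    have hMB : M * (μ B).toReal ≤ M * (m₀ / 2) := mul_le_mul_of_nonneg_left hμB hM0
    nlinarith
  have hup : Sop p φ μ t (⇑f) x ≤ ε := by
    refine csSup_le ⟨_, mem_SopSet_base hp0 hφ hμ f x⟩ ?_
    rintro r ⟨ν, hν, c, hc, hcon, rfl⟩
    haveI := hν.1
    by_cases hνB : (ν B).toReal ≤ m₀
    · have hint := int_split f ν x (le_of_lt (half_pos hε)) hRf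
      have h1 := (abs_le.mp hint).2
      have hMB : M * (ν B).toReal ≤ M * m₀ := mul_le_mul_of_nonneg_left hνB hM0
      nlinarith
    · push_neg at hνB
      have hνBm : ENNReal.ofReal m₀ < ν B := by
        rwa [ENNReal.ofReal_lt_iff_lt_toReal hm₀.le (measure_ne_top ν B)]
      have hWp : W + 1 ≤ Wp p μ ν := by
        set Λ : ℝ≥0∞ := (ENNReal.ofReal (L ^ p * (m₀ / 2))) ^ (1 / p) with hΛdef
        have hcouplow : ∀ γ ∈ {γ : Measure (Ed d × Ed d) | IsCoupling γ μ ν},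
            Λ ≤ (∫⁻ q, (‖q.2 - q.1‖₊ : ℝ≥0∞) ^ p ∂γ) ^ (1 / p) := by
          rintro γ ⟨hγ1, hγ2⟩
          set E := Prod.fst ⁻¹' G ∩ Prod.snd ⁻¹' B with hEdef
          have hEmeas : MeasurableSet E :=
            (measurable_fst hGmeas).inter (measurable_snd hBmeas)
          have hγE : ENNReal.ofReal (m₀ / 2) ≤ γ E := by
            have hsub : Prod.snd ⁻¹' B ⊆ E ∪ Prod.fst ⁻¹' Gᶜ := by
              intro q hq
              by_cases hg : q.1 ∈ G
              · exact Or.inl ⟨hg, hq⟩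
              · exact Or.inr hg
            have hνBγ : ν B = γ (Prod.snd ⁻¹' B) := by
              rw [← hγ2, Measure.map_apply measurable_snd hBmeas]
            have hμGγ : γ (Prod.fst ⁻¹' Gᶜ) = μ Gᶜ := by
              rw [← hγ1, Measure.map_apply measurable_fst hGmeas.compl]
            have hμG : μ Gᶜ ≤ ENNReal.ofReal (m₀ / 2) := by
              refine le_trans (measure_mono ?_) hStail
              intro y hy
              simp only [hGdef, Set.mem_compl_iff, Set.mem_setOf_eq, not_lt] at hy
              exact hy
            have hchain : ENNReal.ofReal (m₀ / 2) + ENNReal.ofReal (m₀ / 2)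
                ≤ γ E + ENNReal.ofReal (m₀ / 2) := by
              calc ENNReal.ofReal (m₀ / 2) + ENNReal.ofReal (m₀ / 2)
                  = ENNReal.ofReal m₀ := by
                    rw [← ENNReal.ofReal_add (by positivity) (by positivity)]
                    ring_nf
                _ ≤ ν B := hνBm.le
                _ = γ (Prod.snd ⁻¹' B) := hνBγ
                _ ≤ γ E + γ (Prod.fst ⁻¹' Gᶜ) :=
                    le_trans (measure_mono hsub) (measure_union_le _ _)
                _ ≤ γ E + ENNReal.ofReal (m₀ / 2) := by
                    rw [hμGγ]
                    exact add_le_add_right hμG _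
            exact (ENNReal.add_le_add_iff_right ENNReal.ofReal_ne_top).mp hchain
          have hdist : ∀ q ∈ E, ENNReal.ofReal L ≤ (‖q.2 - q.1‖₊ : ℝ≥0∞) := by
            rintro q ⟨hq1, hq2⟩
            simp only [hGdef, Set.mem_preimage, Set.mem_setOf_eq] at hq1
            simp only [hBdef, Set.mem_preimage, Set.mem_setOf_eq] at hq2
            have h2 : ‖x‖ - R ≤ ‖q.2‖ := by
              have h1 : ‖x‖ - ‖x + q.2‖ ≤ ‖x - (x + q.2)‖ := norm_sub_norm_le _ _
              have heq : x - (x + q.2) = -q.2 := by abel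
              rw [heq, norm_neg] at h1
              linarith
            have h3 : L ≤ ‖q.2 - q.1‖ := by
              have h4 : ‖q.2‖ - ‖q.1‖ ≤ ‖q.2 - q.1‖ := norm_sub_norm_le _ _
              simp only [hLdef]
              linarith
            calc ENNReal.ofReal L ≤ ENNReal.ofReal ‖q.2 - q.1‖ :=
                  ENNReal.ofReal_le_ofReal h3
              _ = (‖q.2 - q.1‖₊ : ℝ≥0∞) := ofReal_norm_eq_enorm _
          have hcost : ENNReal.ofReal (L ^ p * (m₀ / 2))
              ≤ ∫⁻ q, (‖q.2 - q.1‖₊ : ℝ≥0∞) ^ p ∂γ := by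
            have hind : ∀ q, E.indicator (fun _ => ENNReal.ofReal (L ^ p)) q
                ≤ (‖q.2 - q.1‖₊ : ℝ≥0∞) ^ p := by
              intro q
              by_cases hq : q ∈ E
              · rw [Set.indicator_of_mem hq,
                  ← ENNReal.ofReal_rpow_of_nonneg hLpos.le hp0.le]
                exact ENNReal.rpow_le_rpow (hdist q hq) hp0.le
              · rw [Set.indicator_of_notMem hq]
                exact zero_le
            calc ENNReal.ofReal (L ^ p * (m₀ / 2))
                = ENNReal.ofReal (L ^ p) * ENNReal.ofReal (m₀ / 2) :=
                  ENNReal.ofReal_mul (by positivity)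
              _ ≤ ENNReal.ofReal (L ^ p) * γ E := mul_le_mul_of_nonneg_left hγE zero_le
              _ = ∫⁻ q, E.indicator (fun _ => ENNReal.ofReal (L ^ p)) q ∂γ := by
                  rw [lintegral_indicator hEmeas, setLIntegral_const, mul_comm]
              _ ≤ _ := lintegral_mono hind
          exact ENNReal.rpow_le_rpow hcost (by positivity)
        have hinf_lb : Λ ≤ ⨅ γ ∈ {γ : Measure (Ed d × Ed d) | IsCoupling γ μ ν},
            (∫⁻ q, (‖q.2 - q.1‖₊ : ℝ≥0∞) ^ p ∂γ) ^ (1 / p) := le_iInf₂ hcouplow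
        have hinf_ne_top : (⨅ γ ∈ {γ : Measure (Ed d × Ed d) | IsCoupling γ μ ν},
            (∫⁻ q, (‖q.2 - q.1‖₊ : ℝ≥0∞) ^ p ∂γ) ^ (1 / p)) ≠ ∞ :=
          ne_top_of_le_ne_top
            (ENNReal.rpow_ne_top_of_nonneg (by positivity) (prod_cost_ne_top hp0 hμ hν))
            (iInf₂_le (μ.prod ν) (prod_isCoupling μ ν))
        have hΛval : Λ.toReal = L * β := by
          rw [hΛdef, ENNReal.ofReal_rpow_of_nonneg (by positivity) (by positivity),
            ENNReal.toReal_ofReal (by positivity),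
            Real.mul_rpow (by positivity) (by positivity), ← Real.rpow_mul hLpos.le,
            mul_one_div_cancel hp0.ne', Real.rpow_one, hβdef]
        have hWpge : Λ.toReal ≤ Wp p μ ν := by
          unfold Wp
          exact ENNReal.toReal_mono hinf_ne_top hinf_lb
        rw [hΛval] at hWpge
        have hWL : (W + 1) / β * β ≤ L * β :=
          mul_le_mul_of_nonneg_right (by linarith) hβ.le
        rw [div_mul_cancel₀ _ (ne_of_gt hβ)] at hWL
        linarith
      have hcM : M ≤ c := by
        have hwn : W ≤ ((Wp p μ ν).toNNReal : ℝ) := by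
          calc W ≤ Wp p μ ν := by linarith
            _ ≤ max (Wp p μ ν) 0 := le_max_left _ _
            _ = ((Wp p μ ν).toNNReal : ℝ) := (Real.coe_toNNReal' _).symm
        exact (ENNReal.ofReal_le_ofReal_iff hc).mp
          (le_trans (hWgrow (Wp p μ ν).toNNReal hwn) hcon)
      have hint := abs_int_le f ν x
      have := (abs_le.mp hint).2
      linarith
  rw [abs_le]
  exact ⟨hlow, hup⟩

end Aux5

/-- `S(t)f ∈ C₀(ℝ^d)`, and `S(t)f` has the same modulus of continuity
as `f`. -/
theorem stmt_13 (d : ℕ) (hd : 1 ≤ d) (p : ℝ) (hp : 1 < p)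
    (φ : ℝ≥0 → ℝ≥0∞) (hφ : IsPenalty p φ)
    (μ : Measure (Ed d)) (hμ : MemPp p μ) (t : ℝ) (ht : 0 ≤ t) (f : C₀(Ed d, ℝ)) :
    IsC0 (Sop p φ μ t (⇑f)) ∧
    (∀ ε δ : ℝ, 0 < ε → 0 < δ →
      (∀ x y : Ed d, ‖x - y‖ ≤ δ → |f x - f y| ≤ ε) →
      ∀ x y : Ed d, ‖x - y‖ ≤ δ → |Sop p φ μ t (⇑f) x - Sop p φ μ t (⇑f) y| ≤ ε) := by
  have hp0 : 0 < p := lt_trans one_pos hp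
  refine ⟨⟨(Sop_uniformContinuous hp0 hφ hμ f).continuous, ?_⟩,
    fun ε δ hε hδ hf x y hxy => Sop_modulus hp0 hφ hμ f hε.le hf hxy⟩
  rw [Metric.tendsto_nhds]
  intro ε hε
  obtain ⟨R₀, hR₀⟩ := Sop_small hp hφ hμ ht f (half_pos hε)
  rw [Filter.eventually_iff, Filter.mem_cocompact]
  refine ⟨Metric.closedBall 0 (max R₀ 0), isCompact_closedBall _ _, ?_⟩
  intro x hx
  simp only [Set.mem_compl_iff, Metric.mem_closedBall, dist_zero_right, not_le] at hx
  have h1 : R₀ ≤ ‖x‖ := le_trans (le_max_left _ _) hx.le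
  have h2 := hR₀ x h1
  simp only [Set.mem_setOf_eq, Real.dist_eq, sub_zero]
  have := abs_le.mp h2
  rw [abs_lt]
  constructor <;> linarith
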